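/- Let s ≥ 1 and consider the 2s × 10 array whose i-th row is (4i−3, 4i−2, 4i−1, 4i, 8s+2i−1, 8s+2i+1, 12s+4i−1, 12s+4i, 12s+4i+1, 12s+4i+2). Then for each row i: a_{i,2} + a_{i,4} + a_{i,5} + a_{i,8} + a_{i,9} = a_{i,1} + a_{i,3} + a_{i,6} + a_{i,7} + a_{i,10}, the row is strictly increasing, and the array entries are exactly {1, ..., 8s} ∪ {8s+1, ..., 12s} ∪ {12s+3, ..., 20s+2}. -/
import Mathlib


/-- For `s ≥ 1`, the `2s × 10` array of Lemma 5.3 (row `i` given by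
`(4i-3, 4i-2, 4i-1, 4i, *, *, 12s+4i-1, 12s+4i, 12s+4i+1, 12s+4i+2)` where columns 5–6
are `(8s+2i-1, 8s+2i+1)` for odd `i` and `(8s+2i-2, 8s+2i)` for even `i`) satisfies the
per-row balance identity, is strictly increasing along each row, and its entries are
exactly `{1, …, 20s+2} \ {12s+1, 12s+2}`. -/
theorem stmt15 (s : ℕ) (hs : 1 ≤ s) (a : ℕ → ℕ → ℕ)
    (h1 : ∀ i, a i 1 = 4 * i - 3) (h2 : ∀ i, a i 2 = 4 * i - 2)
    (h3 : ∀ i, a i 3 = 4 * i - 1) (h4 : ∀ i, a i 4 = 4 * i)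
    (h5 : ∀ i, a i 5 = if i % 2 = 1 then 8 * s + 2 * i - 1 else 8 * s + 2 * i - 2)
    (h6 : ∀ i, a i 6 = a i 5 + 2)
    (h7 : ∀ i, a i 7 = 12 * s + 4 * i - 1) (h8 : ∀ i, a i 8 = 12 * s + 4 * i)
    (h9 : ∀ i, a i 9 = 12 * s + 4 * i + 1) (h10 : ∀ i, a i 10 = 12 * s + 4 * i + 2) :
    (∀ i, 1 ≤ i → i ≤ 2 * s →
      (a i 2 + a i 4 + a i 5 + a i 8 + a i 9 =
        a i 1 + a i 3 + a i 6 + a i 7 + a i 10) ∧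
      (∀ j j', 1 ≤ j → j < j' → j' ≤ 10 → a i j < a i j')) ∧
    (Finset.Icc 1 (2 * s)).biUnion (fun i => (Finset.Icc 1 10).image (fun j => a i j)) =
      Finset.Icc 1 (20 * s + 2) \ {12 * s + 1, 12 * s + 2} := by
  constructor
  · intro i hi1 hi2
    have hA : 8 * s + 2 * i - 2 ≤ a i 5 := by rw [h5]; split <;> omega
    have hB : a i 5 ≤ 8 * s + 2 * i - 1 := by rw [h5]; split <;> omega
    constructor
    · rw [h1, h2, h3, h4, h6, h7, h8, h9, h10]; omega
    · intro j j' hj hjj hj'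
      have hj10 : j ≤ 10 := by omega
      have hj1' : 1 ≤ j' := by omega
      interval_cases j <;> interval_cases j' <;>
        simp only [h1, h2, h3, h4, h6, h7, h8, h9, h10] <;> omega
  · ext x
    simp only [Finset.mem_biUnion, Finset.mem_image, Finset.mem_Icc, Finset.mem_sdiff,
      Finset.mem_insert, Finset.mem_singleton]
    constructor
    · rintro ⟨i, ⟨hi1, hi2⟩, j, ⟨hj1, hj2⟩, rfl⟩
      interval_cases j <;>
        simp only [h1, h2, h3, h4, h5, h6, h7, h8, h9, h10] <;>
        (try split) <;> omega
    · rintro ⟨⟨hx1, hx2⟩, hx3⟩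
      rcases le_or_gt x (8 * s) with hc | hc
      · obtain ⟨k, hk, hkb⟩ : ∃ k, (x = 4 * k + 1 ∨ x = 4 * k + 2 ∨ x = 4 * k + 3 ∨
            x = 4 * k + 4) ∧ k + 1 ≤ 2 * s := ⟨(x - 1) / 4, by omega, by omega⟩
        rcases hk with hk | hk | hk | hk
        · exact ⟨k + 1, ⟨by omega, by omega⟩, 1, ⟨by omega, by omega⟩, by rw [h1]; omega⟩
        · exact ⟨k + 1, ⟨by omega, by omega⟩, 2, ⟨by omega, by omega⟩, by rw [h2]; omega⟩
        · exact ⟨k + 1, ⟨by omega, by omega⟩, 3, ⟨by omega, by omega⟩, by rw [h3]; omega⟩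
        · exact ⟨k + 1, ⟨by omega, by omega⟩, 4, ⟨by omega, by omega⟩, by rw [h4]; omega⟩
      rcases le_or_gt x (12 * s) with hc2 | hc2
      · obtain ⟨k, hk, hkb⟩ : ∃ k, (x = 8 * s + 4 * k + 1 ∨ x = 8 * s + 4 * k + 2 ∨
            x = 8 * s + 4 * k + 3 ∨ x = 8 * s + 4 * k + 4) ∧ k + 1 ≤ s :=
          ⟨(x - 8 * s - 1) / 4, by omega, by omega⟩
        rcases hk with hk | hk | hk | hk
        · exact ⟨2 * k + 1, ⟨by omega, by omega⟩, 5, ⟨by omega, by omega⟩,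
            by rw [h5]; split <;> omega⟩
        · exact ⟨2 * k + 2, ⟨by omega, by omega⟩, 5, ⟨by omega, by omega⟩,
            by rw [h5]; split <;> omega⟩
        · exact ⟨2 * k + 1, ⟨by omega, by omega⟩, 6, ⟨by omega, by omega⟩,
            by rw [h6, h5]; split <;> omega⟩
        · exact ⟨2 * k + 2, ⟨by omega, by omega⟩, 6, ⟨by omega, by omega⟩,
            by rw [h6, h5]; split <;> omega⟩
      · obtain ⟨k, hk, hkb⟩ : ∃ k, (x = 12 * s + 4 * k + 3 ∨ x = 12 * s + 4 * k + 4 ∨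
            x = 12 * s + 4 * k + 5 ∨ x = 12 * s + 4 * k + 6) ∧ k + 1 ≤ 2 * s :=
          ⟨(x - 12 * s - 3) / 4, by omega, by omega⟩
        rcases hk with hk | hk | hk | hk
        · exact ⟨k + 1, ⟨by omega, by omega⟩, 7, ⟨by omega, by omega⟩, by rw [h7]; omega⟩
        · exact ⟨k + 1, ⟨by omega, by omega⟩, 8, ⟨by omega, by omega⟩, by rw [h8]; omega⟩
        · exact ⟨k + 1, ⟨by omega, by omega⟩, 9, ⟨by omega, by omega⟩, by rw [h9]; omega⟩
        · exact ⟨k + 1, ⟨by omega, by omega⟩, 10, ⟨by omega, by omega⟩, by rw [h10]; omega⟩
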